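/- (Sufficiency for design-consistency) Let (A,B) and (Ã,B̃) be systems with B̃ = B, and let V = K_n(A,[x₀ B]) be the visible subspace for initial state x₀. If Ãv = Av for all v ∈ V, then for every continuous input u and every t ≥ 0, the trajectories coincide: e^{Ãt} x₀ + ∫₀ᵗ e^{Ã(t−s)} B u(s) ds = e^{At} x₀ + ∫₀ᵗ e^{A(t−s)} B u(s) ds. -/

import Mathlib

/-- The visible subspace `V(x₀) = K_n(A, [x₀ B])`. -/
def visibleSubspace {n m : ℕ} (A : Matrix (Fin n) (Fin n) ℝ) (B : Matrix (Fin n) (Fin m) ℝ)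
    (x0 : Fin n → ℝ) : Submodule ℝ (Fin n → ℝ) :=
  Submodule.span ℝ
    ({v | ∃ k < n, v = (A ^ k).mulVec x0} ∪
      {v | ∃ k < n, ∃ j : Fin m, v = (A ^ k).mulVec (fun i => B i j)})

/-- `M ↦ M *ᵥ w` as a linear map in the matrix. -/
def mulVecL {n : ℕ} (w : Fin n → ℝ) : Matrix (Fin n) (Fin n) ℝ →ₗ[ℝ] (Fin n → ℝ) where
  toFun M := M.mulVec w
  map_add' M N := Matrix.add_mulVec M N w
  map_smul' r M := Matrix.smul_mulVec r M w

open Matrix Polynomial in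
/-- Cayley–Hamilton: `A ^ n *ᵥ w` lies in any submodule containing all `A ^ k *ᵥ w`, `k < n`. -/
lemma pow_card_mulVec_mem {n : ℕ} (A : Matrix (Fin n) (Fin n) ℝ) (V : Submodule ℝ (Fin n → ℝ))
    (w : Fin n → ℝ) (h : ∀ k < n, (A ^ k).mulVec w ∈ V) : (A ^ n).mulVec w ∈ V := by
  rcases Nat.eq_zero_or_pos n with hn | hn
  · subst hn
    have hw : (A ^ 0).mulVec w = 0 := Subsingleton.elim _ _
    rw [hw]; exact V.zero_mem
  have hdeg : A.charpoly.natDegree = n := by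
    simpa using A.charpoly_natDegree_eq_dim
  have hCH : aeval A A.charpoly = 0 := A.aeval_self_charpoly
  rw [aeval_eq_sum_range' (n := n + 1) (by omega) A] at hCH
  rw [Finset.sum_range_succ] at hCH
  have hlead : A.charpoly.coeff n = 1 := by
    have := A.charpoly_monic.coeff_natDegree
    rwa [hdeg] at this
  rw [hlead, one_smul] at hCH
  have hAn : A ^ n = -∑ i ∈ Finset.range n, A.charpoly.coeff i • A ^ i := by
    linear_combination (norm := module) hCH
  rw [hAn, Matrix.neg_mulVec]
  refine V.neg_mem ?_
  have : (∑ i ∈ Finset.range n, A.charpoly.coeff i • A ^ i).mulVec w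
      = ∑ i ∈ Finset.range n, A.charpoly.coeff i • (A ^ i).mulVec w := by
    rw [show ∀ N : Matrix (Fin n) (Fin n) ℝ, N.mulVec w = mulVecL w N from fun _ => rfl, map_sum]
    exact Finset.sum_congr rfl fun i _ => by simp [mulVecL]
  rw [this]
  exact Submodule.sum_mem _ fun i hi => V.smul_mem _ (h i (Finset.mem_range.mp hi))

lemma visible_invariant {n m : ℕ} (A : Matrix (Fin n) (Fin n) ℝ) (B : Matrix (Fin n) (Fin m) ℝ)
    (x0 : Fin n → ℝ) {v : Fin n → ℝ} (hv : v ∈ visibleSubspace A B x0) :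
    A.mulVec v ∈ visibleSubspace A B x0 := by
  set V := visibleSubspace A B x0 with hV
  have hgen : ∀ w, (∀ k < n, (A ^ k).mulVec w ∈ V) → ∀ k < n, A.mulVec ((A ^ k).mulVec w) ∈ V := by
    intro w hw k hk
    have : A.mulVec ((A ^ k).mulVec w) = (A ^ (k + 1)).mulVec w := by
      rw [Matrix.mulVec_mulVec, ← pow_succ']
    rw [this]
    rcases Nat.lt_or_ge (k + 1) n with h1 | h1
    · exact hw _ h1
    · have : k + 1 = n := by omega
      rw [this]
      exact pow_card_mulVec_mem A V w hw
  have hx0 : ∀ k < n, (A ^ k).mulVec x0 ∈ V := fun k hk =>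
    Submodule.subset_span (Or.inl ⟨k, hk, rfl⟩)
  have hcol : ∀ j : Fin m, ∀ k < n, (A ^ k).mulVec (fun i => B i j) ∈ V := fun j k hk =>
    Submodule.subset_span (Or.inr ⟨k, hk, j, rfl⟩)
  refine Submodule.span_induction ?_ ?_ ?_ ?_ hv
  · rintro x (⟨k, hk, rfl⟩ | ⟨k, hk, j, rfl⟩)
    · exact hgen x0 hx0 k hk
    · exact hgen _ (hcol j) k hk
  · simp [Matrix.mulVec_zero]
  · intro x y _ _ hx hy
    rw [Matrix.mulVec_add]; exact V.add_mem hx hy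
  · intro c x _ hx
    rw [Matrix.mulVec_smul]; exact V.smul_mem c hx

lemma pow_mem_visible {n m : ℕ} (A : Matrix (Fin n) (Fin n) ℝ) (B : Matrix (Fin n) (Fin m) ℝ)
    (x0 : Fin n → ℝ) (k : ℕ) {v : Fin n → ℝ} (hv : v ∈ visibleSubspace A B x0) :
    (A ^ k).mulVec v ∈ visibleSubspace A B x0 := by
  induction k with
  | zero => simpa [Matrix.one_mulVec] using hv
  | succ k ih =>
    have : (A ^ (k + 1)).mulVec v = A.mulVec ((A ^ k).mulVec v) := by
      rw [Matrix.mulVec_mulVec, ← pow_succ']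
    rw [this]
    exact visible_invariant A B x0 ih

lemma pow_agree {n m : ℕ} (A At : Matrix (Fin n) (Fin n) ℝ) (B : Matrix (Fin n) (Fin m) ℝ)
    (x0 : Fin n → ℝ)
    (hagree : ∀ v ∈ visibleSubspace A B x0, At.mulVec v = A.mulVec v) (k : ℕ)
    {v : Fin n → ℝ} (hv : v ∈ visibleSubspace A B x0) :
    (At ^ k).mulVec v = (A ^ k).mulVec v := by
  induction k with
  | zero => simp [Matrix.one_mulVec]
  | succ k ih =>
    have h1 : (At ^ (k + 1)).mulVec v = At.mulVec ((At ^ k).mulVec v) := by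
      rw [Matrix.mulVec_mulVec, ← pow_succ']
    have h2 : (A ^ (k + 1)).mulVec v = A.mulVec ((A ^ k).mulVec v) := by
      rw [Matrix.mulVec_mulVec, ← pow_succ']
    rw [h1, h2, ih, hagree _ (pow_mem_visible A B x0 k hv)]

lemma exp_agree {n m : ℕ} (A At : Matrix (Fin n) (Fin n) ℝ) (B : Matrix (Fin n) (Fin m) ℝ)
    (x0 : Fin n → ℝ)
    (hagree : ∀ v ∈ visibleSubspace A B x0, At.mulVec v = A.mulVec v) (c : ℝ)
    {v : Fin n → ℝ} (hv : v ∈ visibleSubspace A B x0) :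
    (NormedSpace.exp (c • At)).mulVec v = (NormedSpace.exp (c • A)).mulVec v := by
  letI : SeminormedRing (Matrix (Fin n) (Fin n) ℝ) := Matrix.linftyOpSemiNormedRing
  letI : NormedRing (Matrix (Fin n) (Fin n) ℝ) := Matrix.linftyOpNormedRing
  letI : NormedAlgebra ℝ (Matrix (Fin n) (Fin n) ℝ) := Matrix.linftyOpNormedAlgebra
  let f : Matrix (Fin n) (Fin n) ℝ →ₗ[ℝ] (Fin n → ℝ) :=
    { toFun := fun M => M.mulVec v
      map_add' := fun M N => Matrix.add_mulVec M N v
      map_smul' := fun r M => Matrix.smul_mulVec r M v }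
  have hf : Continuous f := f.continuous_of_finiteDimensional
  have key : ∀ M : Matrix (Fin n) (Fin n) ℝ,
      (NormedSpace.exp (c • M)).mulVec v
        = ∑' (k : ℕ), ((Nat.factorial k : ℝ)⁻¹ * c ^ k) • ((M ^ k).mulVec v) := by
    intro M
    have hs : Summable fun k : ℕ => ((Nat.factorial k : ℝ)⁻¹ : ℝ) • (c • M) ^ k :=
      NormedSpace.expSeries_summable' (𝕂 := ℝ) (c • M)
    have := (ContinuousLinearMap.mk f hf : Matrix (Fin n) (Fin n) ℝ →L[ℝ] (Fin n → ℝ)).map_tsum hs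
    rw [NormedSpace.exp_eq_tsum (𝕂 := ℝ)]
    show f (∑' (k : ℕ), ((Nat.factorial k : ℝ)⁻¹ : ℝ) • (c • M) ^ k) = _
    rw [show f (∑' (k : ℕ), ((Nat.factorial k : ℝ)⁻¹ : ℝ) • (c • M) ^ k)
        = ∑' (k : ℕ), f (((Nat.factorial k : ℝ)⁻¹ : ℝ) • (c • M) ^ k) from this]
    refine tsum_congr fun k => ?_
    show (((Nat.factorial k : ℝ)⁻¹ : ℝ) • (c • M) ^ k).mulVec v = _
    rw [smul_pow, smul_smul, Matrix.smul_mulVec]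
  rw [key At, key A]
  exact tsum_congr fun k => by rw [pow_agree A At B x0 hagree k hv]

/-- Sufficiency for design-consistency: if `B̃ = B` and `Ã` agrees with `A` on
the visible subspace `V = K_n(A, [x₀ B])`, then for every continuous input `u` and every
`t ≥ 0` the trajectories of the two systems coincide. -/
theorem sufficiency_design_consistency {n m : ℕ} (A At : Matrix (Fin n) (Fin n) ℝ)
    (B : Matrix (Fin n) (Fin m) ℝ) (x0 : Fin n → ℝ)
    (hagree : ∀ v ∈ visibleSubspace A B x0, At.mulVec v = A.mulVec v) :
    ∀ (u : ℝ → Fin m → ℝ), Continuous u → ∀ t : ℝ, 0 ≤ t →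
      (NormedSpace.exp (t • At)).mulVec x0 +
          (∫ s in (0:ℝ)..t, (NormedSpace.exp ((t - s) • At)).mulVec (B.mulVec (u s))) =
        (NormedSpace.exp (t • A)).mulVec x0 +
          ∫ s in (0:ℝ)..t, (NormedSpace.exp ((t - s) • A)).mulVec (B.mulVec (u s)) := by
  intro u _ t _
  rcases Nat.eq_zero_or_pos n with hn | hn
  · subst hn; exact Subsingleton.elim _ _
  have hx0 : x0 ∈ visibleSubspace A B x0 :=
    Submodule.subset_span (Or.inl ⟨0, hn, by simp [Matrix.one_mulVec]⟩)
  have hB : ∀ w : Fin m → ℝ, B.mulVec w ∈ visibleSubspace A B x0 := by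
    intro w
    have : B.mulVec w = ∑ j : Fin m, w j • (fun i => B i j) := by
      funext i
      simp [Matrix.mulVec, dotProduct, Finset.sum_apply, mul_comm]
    rw [this]
    exact Submodule.sum_mem _ fun j _ => Submodule.smul_mem _ _
      (Submodule.subset_span (Or.inr ⟨0, hn, j, by simp [Matrix.one_mulVec]⟩))
  rw [exp_agree A At B x0 hagree t hx0]
  congr 1
  apply intervalIntegral.integral_congr
  intro s _
  exact exp_agree A At B x0 hagree (t - s) (hB (u s))
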